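/- Let Γ be a quiver with vertex set Γ₀ and arrow set Γ₁, and let Γ̂ be its universal abelian covering quiver. The group ℤ^{Γ₁} acts on finitely-supported dimension vectors of Γ̂ by (ξ.β)_{i,χ} = β_{i,χ+ξ}, and the projection c: β ↦ (∑_χ β_{i,χ})_i is invariant under this action. Moreover, for every dimension vector α of Γ, there are only finitely many ℤ^{Γ₁}-orbits of dimension vectors β of Γ̂ with connected support satisfying c(β) = α. -/

import Mathlib

set_option linter.unusedSectionVars false
set_option maxHeartbeats 1000000

variable (Γ₀ Γ₁ : Type*) [Fintype Γ₀] [DecidableEq Γ₀] [Fintype Γ₁] [DecidableEq Γ₁]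
  (s t : Γ₁ → Γ₀)

/-- Adjacency (in either direction) in the universal abelian covering quiver `Γ̂`. -/
def coverAdj (p q : Γ₀ × (Γ₁ → ℤ)) : Prop :=
  ∃ (a : Γ₁) (χ : Γ₁ → ℤ),
    (p = (s a, χ) ∧ q = (t a, χ + Pi.single a 1)) ∨
    (q = (s a, χ) ∧ p = (t a, χ + Pi.single a 1))

/-- The projection `c : β ↦ (∑_χ β_{i,χ})_i` from dimension vectors of `Γ̂` to
dimension vectors of `Γ`. -/
def cmap (β : (Γ₀ × (Γ₁ → ℤ)) →₀ ℕ) (i : Γ₀) : ℕ :=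
  β.sum fun p n => if p.1 = i then n else 0

/-- Connectedness of the support of a dimension vector of `Γ̂`. -/
def ConnSupp (β : (Γ₀ × (Γ₁ → ℤ)) →₀ ℕ) : Prop :=
  ∀ p ∈ β.support, ∀ q ∈ β.support,
    Relation.EqvGen
      (fun x y => x ∈ β.support ∧ y ∈ β.support ∧ coverAdj Γ₀ Γ₁ s t x y) p q

/-- The translation action of `ℤ^{Γ₁}` on dimension vectors of `Γ̂`, as an
equivalence relation on those with connected support and `c β = α`. -/
def translSetoid (α : Γ₀ → ℕ) :
    Setoid {β : (Γ₀ × (Γ₁ → ℤ)) →₀ ℕ //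
      ConnSupp Γ₀ Γ₁ s t β ∧ ∀ i, cmap Γ₀ Γ₁ β i = α i} where
  r β β' := ∃ ξ : Γ₁ → ℤ, ∀ p : Γ₀ × (Γ₁ → ℤ),
    (β' : (Γ₀ × (Γ₁ → ℤ)) →₀ ℕ) p = (β : (Γ₀ × (Γ₁ → ℤ)) →₀ ℕ) (p.1, p.2 + ξ)
  iseqv := by
    constructor
    · intro β; exact ⟨0, fun p => by simp⟩
    · rintro β β' ⟨ξ, h⟩
      exact ⟨-ξ, fun p => by rw [h (p.1, p.2 + -ξ)]; simp⟩
    · rintro β β' β'' ⟨ξ, h⟩ ⟨ξ', h'⟩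
      refine ⟨ξ + ξ', fun p => ?_⟩
      rw [h' p, h (p.1, p.2 + ξ')]
      have e : p.2 + ξ' + ξ = p.2 + (ξ + ξ') := by abel
      rw [e]

lemma coverAdj_symm {p q} (h : coverAdj Γ₀ Γ₁ s t p q) : coverAdj Γ₀ Γ₁ s t q p := by
  obtain ⟨a, χ, h⟩ := h; exact ⟨a, χ, h.symm⟩

lemma coverAdj_shift (ξ : Γ₁ → ℤ) {p q} (h : coverAdj Γ₀ Γ₁ s t p q) :
    coverAdj Γ₀ Γ₁ s t (p.1, p.2 + ξ) (q.1, q.2 + ξ) := by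
  obtain ⟨a, χ, ⟨rfl, rfl⟩ | ⟨rfl, rfl⟩⟩ := h
  · exact ⟨a, χ + ξ, Or.inl ⟨rfl, by simp [Prod.ext_iff]; abel⟩⟩
  · exact ⟨a, χ + ξ, Or.inr ⟨rfl, by simp [Prod.ext_iff]; abel⟩⟩

lemma coverAdj_abs {p q} (h : coverAdj Γ₀ Γ₁ s t p q) (a : Γ₁) :
    |p.2 a - q.2 a| ≤ 1 := by
  obtain ⟨b, χ, ⟨rfl, rfl⟩ | ⟨rfl, rfl⟩⟩ := h <;>
    · simp only [Pi.add_apply, Pi.single_apply]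
      by_cases hab : a = b <;> simp [hab]

lemma cmap_shift (ξ : Γ₁ → ℤ) (β β' : (Γ₀ × (Γ₁ → ℤ)) →₀ ℕ)
    (h : ∀ p : Γ₀ × (Γ₁ → ℤ), β' p = β (p.1, p.2 + ξ)) (i : Γ₀) :
    cmap Γ₀ Γ₁ β' i = cmap Γ₀ Γ₁ β i := by
  unfold cmap Finsupp.sum
  refine Finset.sum_nbij' (fun p => (p.1, p.2 + ξ)) (fun p => (p.1, p.2 - ξ)) ?_ ?_ ?_ ?_ ?_
  · intro p hp
    rw [Finsupp.mem_support_iff] at *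
    rw [← h]; exact hp
  · intro p hp
    rw [Finsupp.mem_support_iff] at *
    rw [h]; simpa using hp
  · intro p _; simp
  · intro p _; simp
  · intro p _; simp [h p]

lemma card_support_le (β : (Γ₀ × (Γ₁ → ℤ)) →₀ ℕ) :
    β.support.card ≤ ∑ i, cmap Γ₀ Γ₁ β i := by
  have h : ∑ i, cmap Γ₀ Γ₁ β i = ∑ p ∈ β.support, β p := by
    unfold cmap Finsupp.sum
    rw [Finset.sum_comm]
    exact Finset.sum_congr rfl fun p _ => by simp
  rw [h]
  calc β.support.card = ∑ _p ∈ β.support, 1 := by simp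
    _ ≤ ∑ p ∈ β.support, β p := Finset.sum_le_sum fun p hp => by
        rw [Finsupp.mem_support_iff] at hp; omega

lemma apply_le_cmap (β : (Γ₀ × (Γ₁ → ℤ)) →₀ ℕ) (p : Γ₀ × (Γ₁ → ℤ)) :
    β p ≤ cmap Γ₀ Γ₁ β p.1 := by
  by_cases hp : p ∈ β.support
  · unfold cmap Finsupp.sum
    calc β p = if p.1 = p.1 then β p else 0 := by simp
      _ ≤ ∑ q ∈ β.support, if q.1 = p.1 then β q else 0 :=
        Finset.single_le_sum (f := fun q => if q.1 = p.1 then β q else 0)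
          (fun q _ => Nat.zero_le _) hp
  · simp [Finsupp.notMem_support_iff.mp hp]

lemma eqvGen_map {A : Type*} {r r' : A → A → Prop} (f : A → A)
    (hf : ∀ x y, r x y → r' (f x) (f y)) :
    ∀ {p q}, Relation.EqvGen r p q → Relation.EqvGen r' (f p) (f q) := by
  intro p q h
  induction h with
  | rel x y h => exact .rel _ _ (hf x y h)
  | refl x => exact .refl _
  | symm x y _ ih => exact .symm _ _ ih
  | trans x y z _ _ ih1 ih2 => exact .trans _ _ _ ih1 ih2

/-- The support graph. -/
def suppGraph (β : (Γ₀ × (Γ₁ → ℤ)) →₀ ℕ) : SimpleGraph ↥β.support where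
  Adj x y := x ≠ y ∧ coverAdj Γ₀ Γ₁ s t ↑x ↑y
  symm := ⟨fun _ _ h => ⟨h.1.symm, coverAdj_symm Γ₀ Γ₁ s t h.2⟩⟩
  loopless := ⟨fun _ h => h.1 rfl⟩

lemma walk_abs {β : (Γ₀ × (Γ₁ → ℤ)) →₀ ℕ} {x y : ↥β.support}
    (w : (suppGraph Γ₀ Γ₁ s t β).Walk x y) (a : Γ₁) :
    |(x : Γ₀ × (Γ₁ → ℤ)).2 a - (y : Γ₀ × (Γ₁ → ℤ)).2 a| ≤ (w.length : ℤ) := by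
  induction w with
  | nil => simp
  | @cons u v z h w ih =>
    have h1 := coverAdj_abs Γ₀ Γ₁ s t h.2 a
    calc |(u : Γ₀ × (Γ₁ → ℤ)).2 a - (z : Γ₀ × (Γ₁ → ℤ)).2 a|
        ≤ |(u : Γ₀ × (Γ₁ → ℤ)).2 a - (v : Γ₀ × (Γ₁ → ℤ)).2 a| +
          |(v : Γ₀ × (Γ₁ → ℤ)).2 a - (z : Γ₀ × (Γ₁ → ℤ)).2 a| := abs_sub_le _ _ _
      _ ≤ 1 + w.length := add_le_add h1 ih
      _ = ((SimpleGraph.Walk.cons h w).length : ℤ) := by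
          rw [SimpleGraph.Walk.length_cons]; push_cast; ring

lemma eqvGen_reachable {β : (Γ₀ × (Γ₁ → ℤ)) →₀ ℕ} {p q : Γ₀ × (Γ₁ → ℤ)}
    (h : Relation.EqvGen
      (fun x y => x ∈ β.support ∧ y ∈ β.support ∧ coverAdj Γ₀ Γ₁ s t x y) p q) :
    p = q ∨ ∃ (hp : p ∈ β.support) (hq : q ∈ β.support),
      (suppGraph Γ₀ Γ₁ s t β).Reachable ⟨p, hp⟩ ⟨q, hq⟩ := by
  induction h with
  | rel x y h =>
    by_cases hxy : x = y
    · exact Or.inl hxy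
    · exact Or.inr ⟨h.1, h.2.1,
        SimpleGraph.Adj.reachable ⟨fun he => hxy (congrArg Subtype.val he), h.2.2⟩⟩
  | refl x => exact Or.inl rfl
  | symm x y _ ih =>
    rcases ih with rfl | ⟨hx, hy, r⟩
    · exact Or.inl rfl
    · exact Or.inr ⟨hy, hx, r.symm⟩
  | trans x y z _ _ ih1 ih2 =>
    rcases ih1 with rfl | ⟨hx, hy, r1⟩
    · exact ih2
    · rcases ih2 with rfl | ⟨hy', hz, r2⟩
      · exact Or.inr ⟨hx, hy, r1⟩
      · refine Or.inr ⟨hx, hz, r1.trans ?_⟩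
        have he : (⟨y, hy⟩ : ↥β.support) = ⟨y, hy'⟩ := Subtype.ext rfl
        rw [he]; exact r2

/-- The projection `c` is invariant under the translation action, and for every
dimension vector `α` of `Γ` there are only finitely many translation orbits of
dimension vectors of `Γ̂` with connected support compatible with `α`. -/
theorem stmt14 :
    (∀ (ξ : Γ₁ → ℤ) (β β' : (Γ₀ × (Γ₁ → ℤ)) →₀ ℕ),
        (∀ p : Γ₀ × (Γ₁ → ℤ), β' p = β (p.1, p.2 + ξ)) →
        ∀ i, cmap Γ₀ Γ₁ β' i = cmap Γ₀ Γ₁ β i) ∧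
      ∀ α : Γ₀ → ℕ, Finite (Quotient (translSetoid Γ₀ Γ₁ s t α)) := by
  classical
  refine ⟨fun ξ β β' h i => cmap_shift Γ₀ Γ₁ ξ β β' h i, fun α => ?_⟩
  set N : ℕ := ∑ i, α i with hN
  set F : Finset (Γ₀ × (Γ₁ → ℤ)) :=
    Finset.univ ×ˢ Fintype.piFinset (fun _ : Γ₁ => Finset.Icc (-(N : ℤ)) (N : ℤ)) with hF
  have key : ∀ x : {β : (Γ₀ × (Γ₁ → ℤ)) →₀ ℕ //
      ConnSupp Γ₀ Γ₁ s t β ∧ ∀ i, cmap Γ₀ Γ₁ β i = α i},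
      ∃ y : {β : (Γ₀ × (Γ₁ → ℤ)) →₀ ℕ //
      ConnSupp Γ₀ Γ₁ s t β ∧ ∀ i, cmap Γ₀ Γ₁ β i = α i},
      (∃ ξ : Γ₁ → ℤ, ∀ p : Γ₀ × (Γ₁ → ℤ),
        (y : (Γ₀ × (Γ₁ → ℤ)) →₀ ℕ) p = (x : (Γ₀ × (Γ₁ → ℤ)) →₀ ℕ) (p.1, p.2 + ξ)) ∧
      (y : (Γ₀ × (Γ₁ → ℤ)) →₀ ℕ).support ⊆ F := by
    intro x
    by_cases hx0 : (x : (Γ₀ × (Γ₁ → ℤ)) →₀ ℕ) = 0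
    · exact ⟨x, ⟨0, fun p => by simp⟩, by rw [hx0]; simp⟩
    · obtain ⟨p₀, hp₀⟩ := Finsupp.support_nonempty_iff.mpr hx0
      set β : (Γ₀ × (Γ₁ → ℤ)) →₀ ℕ := (x : (Γ₀ × (Γ₁ → ℤ)) →₀ ℕ) with hβ
      set ξ : Γ₁ → ℤ := p₀.2 with hξ
      set e : (Γ₀ × (Γ₁ → ℤ)) ≃ (Γ₀ × (Γ₁ → ℤ)) :=
        (Equiv.refl Γ₀).prodCongr (Equiv.addRight ξ) with he
      set β' : (Γ₀ × (Γ₁ → ℤ)) →₀ ℕ := Finsupp.equivMapDomain e.symm β with hβ'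
      have happ : ∀ p : Γ₀ × (Γ₁ → ℤ), β' p = β (p.1, p.2 + ξ) := by
        intro p
        rw [hβ', Finsupp.equivMapDomain_apply, Equiv.symm_symm]
        rfl
      have hmem : ∀ p : Γ₀ × (Γ₁ → ℤ), p ∈ β'.support ↔ (p.1, p.2 + ξ) ∈ β.support := by
        intro p
        rw [Finsupp.mem_support_iff, Finsupp.mem_support_iff, happ]
      have hconn : ConnSupp Γ₀ Γ₁ s t β' := by
        intro p hp q hq
        have h1 := x.2.1 (p.1, p.2 + ξ) ((hmem p).mp hp) (q.1, q.2 + ξ) ((hmem q).mp hq)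
        have h2 := eqvGen_map
          (r' := fun u v => u ∈ β'.support ∧ v ∈ β'.support ∧ coverAdj Γ₀ Γ₁ s t u v)
          (fun y : Γ₀ × (Γ₁ → ℤ) => (y.1, y.2 + (-ξ)))
          (fun u v huv => ⟨(hmem _).mpr (by simpa using huv.1),
            (hmem _).mpr (by simpa using huv.2.1),
            coverAdj_shift Γ₀ Γ₁ s t (-ξ) huv.2.2⟩) h1
        simpa using h2
      have hcm : ∀ i, cmap Γ₀ Γ₁ β' i = α i := fun i => by
        rw [cmap_shift Γ₀ Γ₁ ξ β β' happ i]; exact x.2.2 i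
      refine ⟨⟨β', hconn, hcm⟩, ⟨ξ, happ⟩, ?_⟩
      intro q hq
      have hb : ((p₀.1, (0 : Γ₁ → ℤ)) : Γ₀ × (Γ₁ → ℤ)) ∈ β'.support := by
        rw [hmem]; simpa using hp₀
      have hboundcard : (β'.support.card : ℤ) ≤ (N : ℤ) := by
        have h3 := card_support_le Γ₀ Γ₁ β'
        have h4 : ∑ i, cmap Γ₀ Γ₁ β' i = N := by
          rw [hN]; exact Finset.sum_congr rfl fun i _ => hcm i
        rw [h4] at h3
        exact_mod_cast h3
      have habs : ∀ a, |q.2 a| ≤ (N : ℤ) := by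
        intro a
        rcases eqvGen_reachable Γ₀ Γ₁ s t (hconn q hq _ hb) with heq | ⟨hq', hb', hr⟩
        · rw [heq]; simpa using (Int.natCast_nonneg N)
        · obtain ⟨w⟩ := hr
          have hlen : ((w.toPath).1.length : ℤ)
              < (β'.support.card : ℤ) := by
            have h6 := (w.toPath).2.length_lt
            rw [Fintype.card_coe] at h6
            exact_mod_cast h6
          have h5 := walk_abs Γ₀ Γ₁ s t
            ((w.toPath).1) a
          simp only [Prod.snd] at h5
          have h7 : |q.2 a - (0 : ℤ)| ≤ _ := h5
          rw [sub_zero] at h7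
          linarith
      simp only [hF, Finset.mem_product, Fintype.mem_piFinset, Finset.mem_Icc]
      exact ⟨Finset.mem_univ _, fun a => abs_le.mp (habs a)⟩
  haveI : Finite {y : {β : (Γ₀ × (Γ₁ → ℤ)) →₀ ℕ //
      ConnSupp Γ₀ Γ₁ s t β ∧ ∀ i, cmap Γ₀ Γ₁ β i = α i} //
      (y : (Γ₀ × (Γ₁ → ℤ)) →₀ ℕ).support ⊆ F} := by
    refine Finite.of_injective (β := ∀ p : ↥F, Fin (α (p : Γ₀ × (Γ₁ → ℤ)).1 + 1))
      (fun d => fun p =>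
        ⟨(d : (Γ₀ × (Γ₁ → ℤ)) →₀ ℕ) (p : Γ₀ × (Γ₁ → ℤ)),
         Nat.lt_succ_of_le (by
           have h8 := apply_le_cmap Γ₀ Γ₁ (d : (Γ₀ × (Γ₁ → ℤ)) →₀ ℕ) (p : Γ₀ × (Γ₁ → ℤ))
           rwa [d.1.2.2] at h8)⟩) ?_
    intro d1 d2 hd
    apply Subtype.ext; apply Subtype.ext
    ext q
    by_cases hqF : q ∈ F
    · exact congrArg Fin.val (congrFun hd ⟨q, hqF⟩)
    · have h1 : q ∉ ((d1 : (Γ₀ × (Γ₁ → ℤ)) →₀ ℕ)).support := fun hc => hqF (d1.2 hc)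
      have h2 : q ∉ ((d2 : (Γ₀ × (Γ₁ → ℤ)) →₀ ℕ)).support := fun hc => hqF (d2.2 hc)
      rw [Finsupp.notMem_support_iff.mp h1, Finsupp.notMem_support_iff.mp h2]
  refine Finite.of_surjective
    (fun d : {y : {β : (Γ₀ × (Γ₁ → ℤ)) →₀ ℕ //
      ConnSupp Γ₀ Γ₁ s t β ∧ ∀ i, cmap Γ₀ Γ₁ β i = α i} //
      (y : (Γ₀ × (Γ₁ → ℤ)) →₀ ℕ).support ⊆ F} =>
      Quotient.mk (translSetoid Γ₀ Γ₁ s t α) d.1) ?_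
  intro c
  induction c using Quotient.ind with
  | _ x =>
    obtain ⟨y, hr, hy⟩ := key x
    exact ⟨⟨y, hy⟩, Quotient.sound ((translSetoid Γ₀ Γ₁ s t α).iseqv.symm hr)⟩
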